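/- Let F([-1,1], 0) be the standard flat strong quasi-MV* algebra on [-1,1]: a ⊕_F b = 0, -_F a = -a, a⁺ = 0, a⁻ = 0, and 0 = 1 = 0. Let t and s be terms in the language {⊕, -, ⁺, ⁻, 0, 1}. Then the variety of flat strong quasi-MV* algebras satisfies t ≈ s if and only if F([-1,1], 0) satisfies t ≈ s. -/

import Mathlib

def qmvVee {A : Type*} (ad : A → A → A) (ng ps ns : A → A) (x y : A) : A :=
  ad (ad (ps x) (ps (ad (ng (ps x)) (ps y)))) (ad (ns x) (ps (ad (ng (ns x)) (ns y))))

structure IsQuasiMVStar {A : Type*} (ad : A → A → A) (ng ps ns : A → A) (z o : A) : Prop where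
  qmv1 : ∀ x y, ad x y = ad y x
  qmv2 : ∀ x y w, ad (ad o x) (ad y (ad o w)) = ad (ad (ad o x) y) (ad o w)
  qmv3 : ∀ x, ad (ad x o) o = o
  qmv4 : ∀ x y, ad (ad x y) z = ad x y
  qmv5a : ∀ x, ad (ps x) z = ps (ad x z)
  qmv5b : ∀ x, ps (ad x z) = ad o (ad (ng o) x)
  qmv5c : ∀ x, ad (ns x) z = ns (ad x z)
  qmv5d : ∀ x, ns (ad x z) = ad (ng o) (ad o x)
  qmv6 : ∀ x y, ad x y = ad (ad (ps x) (ps y)) (ad (ns x) (ns y))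
  qmv7 : z = ng z
  qmv8 : ∀ x, ad x (ng x) = z
  qmv9 : ∀ x y, ng (ad x y) = ad (ng x) (ng y)
  qmv10 : ∀ x, ng (ng x) = x
  qmv11 : ∀ x y, ps (ad (ng x) (ad x y)) = ad (ng (ps x)) (ad (ps x) (ps y))
  qmv12 : ∀ x y, qmvVee ad ng ps ns x y = qmvVee ad ng ps ns y x
  qmv13 : ∀ x y w, qmvVee ad ng ps ns x (qmvVee ad ng ps ns y w) = qmvVee ad ng ps ns (qmvVee ad ng ps ns x y) w
  qmv14 : ∀ x y w, ad x (qmvVee ad ng ps ns y w) = qmvVee ad ng ps ns (ad x y) (ad x w)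

def IsStrongQuasiMVStar {A : Type*} (ad : A → A → A) (ng ps ns : A → A) (z o : A) : Prop :=
  IsQuasiMVStar ad ng ps ns z o ∧ (∀ x, ps x = ad (ps x) z) ∧ (∀ x, ns x = ad (ns x) z)

/-- Terms in the language `{⊕, -, ⁺, ⁻, 0, 1}` of (strong) quasi-MV* algebras. -/
inductive MVTerm : Type where
  | var : ℕ → MVTerm
  | zero : MVTerm
  | one : MVTerm
  | add : MVTerm → MVTerm → MVTerm
  | neg : MVTerm → MVTerm
  | pos : MVTerm → MVTerm
  | nneg : MVTerm → MVTerm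

/-- Evaluation of a term under an assignment `v` of the variables. -/
def MVTerm.eval {A : Type*} (ad : A → A → A) (ng ps ns : A → A) (z o : A)
    (v : ℕ → A) : MVTerm → A
  | var n => v n
  | zero => z
  | one => o
  | add t s => ad (MVTerm.eval ad ng ps ns z o v t) (MVTerm.eval ad ng ps ns z o v s)
  | neg t => ng (MVTerm.eval ad ng ps ns z o v t)
  | pos t => ps (MVTerm.eval ad ng ps ns z o v t)
  | nneg t => ns (MVTerm.eval ad ng ps ns z o v t)

/-- The carrier `[-1,1]` of the standard flat strong quasi-MV* algebra. -/
def IC : Type := {a : ℝ // a ∈ Set.Icc (-1 : ℝ) 1}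

noncomputable def fZeroEl : IC := ⟨0, by rw [Set.mem_Icc]; constructor <;> norm_num⟩

noncomputable def fAdd (_ _ : IC) : IC := fZeroEl

noncomputable def fNeg (a : IC) : IC :=
  ⟨-a.val, by
    have := a.prop
    rw [Set.mem_Icc] at this ⊢
    constructor <;> linarith [this.1, this.2]⟩

noncomputable def fPos (_ : IC) : IC := fZeroEl
noncomputable def fNs (_ : IC) : IC := fZeroEl

universe u


/-- Normal form of a term in a flat strong quasi-MV* algebra: either `z`
(for `none`) or a possibly negated variable. -/
def mvNF : MVTerm → Option (ℕ × Bool)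
  | MVTerm.var n => some (n, false)
  | MVTerm.zero => none
  | MVTerm.one => none
  | MVTerm.add _ _ => none
  | MVTerm.neg a => (mvNF a).map (fun p => (p.1, !p.2))
  | MVTerm.pos _ => none
  | MVTerm.nneg _ => none

lemma flat_eval {A : Type*} {ad : A → A → A} {ng ps ns : A → A} {z o : A}
    (h : IsStrongQuasiMVStar ad ng ps ns z o) (hz : z = o) (v : ℕ → A) (t : MVTerm) :
    MVTerm.eval ad ng ps ns z o v t =
      (mvNF t).elim z (fun p => cond p.2 (ng (v p.1)) (v p.1)) := by
  obtain ⟨hq, hps, hns⟩ := h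
  have adz : ∀ x, ad x z = z := fun x => by
    have h3 := hq.qmv3 x
    rw [← hz] at h3
    rw [← hq.qmv4 x z]; exact h3
  have adxy : ∀ x y, ad x y = z := fun x y => by
    rw [← hq.qmv4 x y]; exact adz _
  have psz : ∀ x, ps x = z := fun x => by rw [hps x]; exact adz _
  have nsz : ∀ x, ns x = z := fun x => by rw [hns x]; exact adz _
  have ngz : ng z = z := (hq.qmv7).symm
  induction t with
  | var n => rfl
  | zero => rfl
  | one => exact hz.symm
  | add a b iha ihb => simpa [MVTerm.eval, mvNF] using adxy _ _
  | neg a ih =>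
    cases hnf : mvNF a with
    | none =>
      rw [hnf] at ih
      simp only [MVTerm.eval, mvNF, hnf, Option.map_none, Option.elim] at *
      rw [ih, ngz]
    | some p =>
      obtain ⟨n, b⟩ := p
      rw [hnf] at ih
      cases b <;>
        simp only [MVTerm.eval, mvNF, hnf, Option.map_some, Option.elim,
          Bool.not_true, Bool.not_false, cond_true, cond_false] at * <;>
        rw [ih]
      exact hq.qmv10 _
  | pos a ih => simpa [MVTerm.eval, mvNF] using psz _
  | nneg a ih => simpa [MVTerm.eval, mvNF] using nsz _

/-- A flat algebra structure with constant add and constant z is strong quasi-MV*,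
provided negation is involutive and fixes z. -/
lemma flat_isStrong {A : Type*} (ng : A → A) (z : A)
    (h7 : z = ng z) (h10 : ∀ x, ng (ng x) = x) :
    IsStrongQuasiMVStar (fun _ _ => z) ng (fun _ => z) (fun _ => z) z z := by
  refine ⟨⟨?_, ?_, ?_, ?_, ?_, ?_, ?_, ?_, ?_, ?_, ?_, ?_, ?_, ?_, ?_, ?_, ?_⟩, ?_, ?_⟩ <;>
    intros <;> simp [qmvVee, h7.symm, h10]

noncomputable def ICelt (n : ℕ) : IC :=
  ⟨1 / (n + 2), by
    rw [Set.mem_Icc]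
    have h1 : (0:ℝ) < 1 / ((n:ℝ) + 2) := by positivity
    constructor
    · linarith
    · rw [div_le_one (by positivity)]
      have : (0:ℝ) ≤ (n : ℝ) := Nat.cast_nonneg _
      linarith⟩

noncomputable def ICnf : ℕ × Bool → IC :=
  fun p => cond p.2 (fNeg (ICelt p.1)) (ICelt p.1)

lemma IC_inj : Function.Injective
    (fun w : Option (ℕ × Bool) => (w.elim fZeroEl ICnf).val) := by
  have key : ∀ n : ℕ, (0:ℝ) < 1 / ((n:ℝ) + 2) := fun n => by positivity
  have inj : ∀ n m : ℕ, (1:ℝ) / ((n:ℝ) + 2) = 1 / ((m:ℝ) + 2) → n = m := by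
    intro n m h
    have hn : ((n:ℝ) + 2) ≠ 0 := by positivity
    have hm : ((m:ℝ) + 2) ≠ 0 := by positivity
    rw [div_eq_div_iff hn hm] at h
    have : (n:ℝ) = m := by linarith
    exact_mod_cast this
  intro a b hab
  match a, b with
  | none, none => rfl
  | none, some ⟨m, c⟩ =>
    exfalso
    cases c <;>
      simp only [Option.elim, ICnf, ICelt, fZeroEl, fNeg, cond_true, cond_false, cond] at hab <;>
      linarith [key m]
  | some ⟨n, b⟩, none =>
    exfalso
    cases b <;>
      simp only [Option.elim, ICnf, ICelt, fZeroEl, fNeg, cond_true, cond_false, cond] at hab <;>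
      linarith [key n]
  | some ⟨n, b⟩, some ⟨m, c⟩ =>
    cases b <;> cases c <;>
      simp only [Option.elim, ICnf, ICelt, fNeg, cond_true, cond_false, cond] at hab
    · rw [inj n m hab]
    · exact absurd hab (by have := key n; have := key m; intro h; linarith)
    · exact absurd hab (by have := key n; have := key m; intro h; linarith)
    · have : (1:ℝ) / ((n:ℝ) + 2) = 1 / ((m:ℝ) + 2) := by linarith
      rw [inj n m this]

lemma fNeg_zero : fNeg fZeroEl = fZeroEl := by
  simp [fNeg, fZeroEl]
  rfl

lemma fNeg_fNeg : ∀ a, fNeg (fNeg a) = a := by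
  intro a; simp [fNeg]
  rfl

lemma IC_isStrong : IsStrongQuasiMVStar fAdd fNeg fPos fNs fZeroEl fZeroEl := by
  exact flat_isStrong fNeg fZeroEl fNeg_zero.symm fNeg_fNeg

/-- The variety of flat strong quasi-MV* algebras satisfies `t ≈ s` iff the standard
flat strong quasi-MV* algebra `F([-1,1], 0)` satisfies `t ≈ s`. -/
theorem stmt10 (t s : MVTerm) :
    (∀ (A : Type u) (ad : A → A → A) (ng ps ns : A → A) (z o : A),
        IsStrongQuasiMVStar ad ng ps ns z o → z = o →
        ∀ v : ℕ → A, MVTerm.eval ad ng ps ns z o v t = MVTerm.eval ad ng ps ns z o v s) ↔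
    (∀ v : ℕ → IC,
        MVTerm.eval fAdd fNeg fPos fNs fZeroEl fZeroEl v t =
          MVTerm.eval fAdd fNeg fPos fNs fZeroEl fZeroEl v s) := by
  constructor
  · intro h v
    -- instantiate the universal statement at the flat algebra on `ULift (Option (ℕ × Bool))`
    let ng : ULift.{u} (Option (ℕ × Bool)) → ULift.{u} (Option (ℕ × Bool)) :=
      fun x => ULift.up ((x.down).map (fun p => (p.1, !p.2)))
    have hstr : IsStrongQuasiMVStar (fun _ _ => ULift.up.{u} (none : Option (ℕ × Bool)))
        ng (fun _ => ULift.up none) (fun _ => ULift.up none) (ULift.up none) (ULift.up none) := by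
      apply flat_isStrong
      · rfl
      · intro x
        obtain ⟨d⟩ := x
        cases d with
        | none => rfl
        | some p => obtain ⟨n, b⟩ := p; cases b <;> rfl
    have key := h _ _ ng _ _ _ _ hstr rfl (fun n => ULift.up (some (n, false)))
    rw [flat_eval hstr rfl, flat_eval hstr rfl] at key
    have embed : ∀ u : MVTerm,
        (mvNF u).elim (ULift.up.{u} (none : Option (ℕ × Bool)))
          (fun p => cond p.2 (ng (ULift.up (some (p.1, false)))) (ULift.up (some (p.1, false))))
        = ULift.up (mvNF u) := by
      intro u
      cases hm : mvNF u with
      | none => rfl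
      | some p => obtain ⟨n, b⟩ := p; cases b <;> rfl
    rw [embed t, embed s] at key
    have hnf : mvNF t = mvNF s := congrArg ULift.down key
    rw [flat_eval IC_isStrong rfl, flat_eval IC_isStrong rfl, hnf]
  · intro h A ad ng ps ns z o hstr hz v
    have key := h ICelt
    rw [flat_eval IC_isStrong rfl, flat_eval IC_isStrong rfl] at key
    have hnf : mvNF t = mvNF s := by
      apply IC_inj
      exact congrArg Subtype.val key
    rw [flat_eval hstr hz, flat_eval hstr hz, hnf]
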